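/- Let κ₁, κ₂ ∈ ℂ∖{0} and ε₁, ε₂, φ₁, φ₂ ∈ ℂ with ε₁φ₂ + κ₂ ≠ 0. Define κ₄ = ε₁φ₂ + κ₂, φ₄ = κ₁φ₂, κ₃ = κ₁κ₂/(ε₁φ₂ + κ₂), ε₃ = ε₁/(ε₁φ₂ + κ₂), ε₄ = (ε₁κ₂² + ε₂κ₂ + (ε₁²κ₂ + ε₁ε₂)φ₂ − ε₁)/(κ₁κ₂), and φ₃ = (κ₂²φ₁ + ε₁φ₂² + (ε₁κ₂φ₁ − (κ₁² − 1)κ₂)φ₂)/(ε₁φ₂ + κ₂). Then κ₃ ≠ 0 and κ₄ ≠ 0, and the SL₂(ℂ)*-elements a₁, a₂, a₃, a₄ with parameters (κᵢ, εᵢ, φᵢ) satisfy the biquandle equations a₁⁺a₂⁺ = a₄⁺a₃⁺, a₁⁻a₂⁻ = a₄⁻a₃⁻, and a₁⁻a₂⁺ = a₄⁺a₃⁻. -/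

import Mathlib

/-- The biquandle braiding formulas in `SL₂(ℂ)*`-coordinates: given admissible colors
`a₁, a₂` (i.e. `ε₁φ₂ + κ₂ ≠ 0`), the elements `a₄, a₃` defined by the stated formulas are
genuine `SL₂(ℂ)*`-elements (`κ₃, κ₄ ≠ 0`) and satisfy the biquandle equations
`a₁⁺a₂⁺ = a₄⁺a₃⁺`, `a₁⁻a₂⁻ = a₄⁻a₃⁻`, `a₁⁻a₂⁺ = a₄⁺a₃⁻`, where the `SL₂(ℂ)*`-element
with parameters `(κ, ε, φ)` is the pair `a⁺ = [[κ,0],[φ,1]]`, `a⁻ = [[1,ε],[0,κ]]`. -/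
theorem stmt1 (κ₁ κ₂ ε₁ ε₂ φ₁ φ₂ : ℂ) (hκ₁ : κ₁ ≠ 0) (hκ₂ : κ₂ ≠ 0)
    (h : ε₁ * φ₂ + κ₂ ≠ 0)
    (κ₄ φ₄ κ₃ ε₃ ε₄ φ₃ : ℂ)
    (hκ₄ : κ₄ = ε₁ * φ₂ + κ₂)
    (hφ₄ : φ₄ = κ₁ * φ₂)
    (hκ₃ : κ₃ = κ₁ * κ₂ / (ε₁ * φ₂ + κ₂))
    (hε₃ : ε₃ = ε₁ / (ε₁ * φ₂ + κ₂))
    (hε₄ : ε₄ = (ε₁ * κ₂ ^ 2 + ε₂ * κ₂ + (ε₁ ^ 2 * κ₂ + ε₁ * ε₂) * φ₂ - ε₁) / (κ₁ * κ₂))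
    (hφ₃ : φ₃ = (κ₂ ^ 2 * φ₁ + ε₁ * φ₂ ^ 2 + (ε₁ * κ₂ * φ₁ - (κ₁ ^ 2 - 1) * κ₂) * φ₂) /
      (ε₁ * φ₂ + κ₂)) :
    κ₃ ≠ 0 ∧ κ₄ ≠ 0 ∧
    !![κ₁, 0; φ₁, 1] * !![κ₂, 0; φ₂, 1] = !![κ₄, 0; φ₄, 1] * !![κ₃, 0; φ₃, 1] ∧
    !![(1 : ℂ), ε₁; 0, κ₁] * !![(1 : ℂ), ε₂; 0, κ₂] =
      !![(1 : ℂ), ε₄; 0, κ₄] * !![(1 : ℂ), ε₃; 0, κ₃] ∧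
    !![(1 : ℂ), ε₁; 0, κ₁] * !![κ₂, 0; φ₂, 1] = !![κ₄, 0; φ₄, 1] * !![(1 : ℂ), ε₃; 0, κ₃] := by
  subst hκ₄ hφ₄ hκ₃ hε₃ hε₄ hφ₃
  have h1 : κ₂ + φ₂ * ε₁ ≠ 0 := by rwa [add_comm, mul_comm]
  have h2 : φ₂ * ε₁ + κ₂ ≠ 0 := by rwa [mul_comm]
  refine ⟨div_ne_zero (mul_ne_zero hκ₁ hκ₂) h, h, ?_, ?_, ?_⟩ <;>
  · ext i j
    fin_cases i <;> fin_cases j <;>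
      simp [Matrix.mul_apply, Fin.sum_univ_two] <;>
      (try field_simp [h1, h2]) <;> ring
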